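/- For every integer n ≥ 3 there exists a set of 2^{n-2} points in the plane in general position containing no n points in convex position. -/

import Mathlib

/-- Signed area determinant: positive iff `c` is to the left of the directed line `a → b`. -/
def det2 (a b c : ℝ × ℝ) : ℝ :=
  (b.1 - a.1) * (c.2 - a.2) - (b.2 - a.2) * (c.1 - a.1)

/-- A planar point set is in general position if no three of its points are collinear. -/
def GenPos (S : Set (ℝ × ℝ)) : Prop :=
  ∀ p ∈ S, ∀ q ∈ S, ∀ r ∈ S, p ≠ q → p ≠ r → q ≠ r →
    ¬ Collinear ℝ ({p, q, r} : Set (ℝ × ℝ))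

/-- A planar point set is in convex position if every point is a vertex of the convex hull,
i.e. no point lies in the convex hull of the others. -/
def ConvexPos (S : Set (ℝ × ℝ)) : Prop :=
  ∀ p ∈ S, p ∉ convexHull ℝ (S \ {p})

namespace ES

lemma det2_cyc (a b c : ℝ × ℝ) : det2 a b c = det2 b c a := by
  simp only [det2]; ring

lemma det2_swap (a b c : ℝ × ℝ) : det2 a b c = -det2 a c b := by
  simp only [det2]; ring

lemma det2_decomp (a b c d : ℝ × ℝ) :
    det2 a b c = det2 d b c + det2 a d c + det2 a b d := by
  simp only [det2]; ring

lemma not_collinear_of_det2 {p q r : ℝ × ℝ} (h : det2 p q r ≠ 0) :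
    ¬ Collinear ℝ ({p, q, r} : Set (ℝ × ℝ)) := by
  intro hc
  have hp : p ∈ ({p, q, r} : Set (ℝ × ℝ)) := by simp
  rw [collinear_iff_of_mem hp] at hc
  obtain ⟨v, hv⟩ := hc
  obtain ⟨tq, hq⟩ := hv q (by simp)
  obtain ⟨tr, hr⟩ := hv r (by simp)
  apply h
  have hq1 : q.1 = tq * v.1 + p.1 := by rw [hq]; rfl
  have hq2 : q.2 = tq * v.2 + p.2 := by rw [hq]; rfl
  have hr1 : r.1 = tr * v.1 + p.1 := by rw [hr]; rfl
  have hr2 : r.2 = tr * v.2 + p.2 := by rw [hr]; rfl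
  simp only [det2, hq1, hq2, hr1, hr2]; ring



lemma mem_triangle {a b c q : ℝ × ℝ} (hD : det2 a b c ≠ 0)
    (h1 : 0 ≤ det2 q b c * det2 a b c) (h2 : 0 ≤ det2 a q c * det2 a b c)
    (h3 : 0 ≤ det2 a b q * det2 a b c) :
    q ∈ convexHull ℝ ({a, b, c} : Set (ℝ × ℝ)) := by
  set D := det2 a b c with hDdef
  have hD2 : (0:ℝ) < D * D := mul_self_pos.mpr hD
  set w1 : ℝ := det2 q b c / D with hw1def
  set w2 : ℝ := det2 a q c / D with hw2def
  set w3 : ℝ := det2 a b q / D with hw3def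
  have hw1 : 0 ≤ w1 := by
    have e1 : det2 q b c * D / (D * D) = w1 := by
      rw [hw1def]; field_simp
    exact e1 ▸ div_nonneg h1 hD2.le
  have hw2 : 0 ≤ w2 := by
    have e1 : det2 a q c * D / (D * D) = w2 := by
      rw [hw2def]; field_simp
    exact e1 ▸ div_nonneg h2 hD2.le
  have hw3 : 0 ≤ w3 := by
    have e1 : det2 a b q * D / (D * D) = w3 := by
      rw [hw3def]; field_simp
    exact e1 ▸ div_nonneg h3 hD2.le
  have hsum : w1 + w2 + w3 = 1 := by
    rw [hw1def, hw2def, hw3def, ← add_div, ← add_div,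
      div_eq_one_iff_eq hD, hDdef]
    simp only [det2]; ring
  have hq : q = w1 • a + w2 • b + w3 • c := by
    have e1 : det2 q b c * a.1 + det2 a q c * b.1 + det2 a b q * c.1 = D * q.1 := by
      simp only [hDdef, det2]; ring
    have e2 : det2 q b c * a.2 + det2 a q c * b.2 + det2 a b q * c.2 = D * q.2 := by
      simp only [hDdef, det2]; ring
    have : (w1 • a + w2 • b + w3 • c : ℝ × ℝ) =
        (w1 * a.1 + w2 * b.1 + w3 * c.1, w1 * a.2 + w2 * b.2 + w3 * c.2) := by
      simp [Prod.ext_iff, Prod.smul_def, smul_eq_mul]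
    rw [this]
    have hq1 : q.1 = w1 * a.1 + w2 * b.1 + w3 * c.1 := by
      rw [hw1def, hw2def, hw3def]
      field_simp
      linarith [e1]
    have hq2 : q.2 = w1 * a.2 + w2 * b.2 + w3 * c.2 := by
      rw [hw1def, hw2def, hw3def]
      field_simp
      linarith [e2]
    exact Prod.ext hq1 hq2
  have hconv := convex_convexHull ℝ ({a, b, c} : Set (ℝ × ℝ))
  have ha : a ∈ convexHull ℝ ({a, b, c} : Set (ℝ × ℝ)) := subset_convexHull _ _ (by simp)
  have hb : b ∈ convexHull ℝ ({a, b, c} : Set (ℝ × ℝ)) := subset_convexHull _ _ (by simp)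
  have hc : c ∈ convexHull ℝ ({a, b, c} : Set (ℝ × ℝ)) := subset_convexHull _ _ (by simp)
  have key : ∑ i : Fin 3, (![w1, w2, w3] i) • (![a, b, c] i) ∈
      convexHull ℝ ({a, b, c} : Set (ℝ × ℝ)) := by
    apply hconv.sum_mem
    · intro i _
      fin_cases i
      · simpa using hw1
      · simpa using hw2
      · simpa using hw3
    · rw [Fin.sum_univ_three]
      simpa using hsum
    · intro i _
      fin_cases i
      · simpa using ha
      · simpa using hb
      · simpa using hc
  rw [hq]
  simpa [Fin.sum_univ_three] using key



lemma mem_segment_vert {u v q : ℝ × ℝ} (h1 : u.1 = q.1) (h2 : v.1 = q.1)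
    (hu : u.2 ≤ q.2) (hv : q.2 ≤ v.2) : q ∈ segment ℝ u v := by
  rcases eq_or_lt_of_le (hu.trans hv) with h | h
  · have hq2 : q.2 = u.2 := le_antisymm (h ▸ hv) hu
    have : q = u := Prod.ext h1.symm hq2
    rw [this]; exact left_mem_segment ℝ u v
  · refine ⟨1 - (q.2 - u.2) / (v.2 - u.2), (q.2 - u.2) / (v.2 - u.2), ?_, ?_, by ring, ?_⟩
    · have : (q.2 - u.2) / (v.2 - u.2) ≤ 1 := by
        rw [div_le_one (by linarith)]; linarith
      linarith
    · exact div_nonneg (by linarith) (by linarith)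
    · have hne : v.2 - u.2 ≠ 0 := by linarith
      apply Prod.ext
      · simp only [Prod.fst_add, Prod.smul_fst, smul_eq_mul]
        rw [h1, h2]; ring
      · simp only [Prod.snd_add, Prod.smul_snd, smul_eq_mul]
        field_simp
        ring
lemma exists_seg_at_x {a b : ℝ × ℝ} (hab : a.1 < b.1) {x : ℝ} (h1 : a.1 ≤ x)
    (h2 : x ≤ b.1) : ∃ w ∈ segment ℝ a b, w.1 = x ∧
      ∀ q : ℝ × ℝ, q.1 = x → (b.1 - a.1) * (q.2 - w.2) = det2 a b q := by
  set t : ℝ := (x - a.1) / (b.1 - a.1) with ht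
  have hd : (0:ℝ) < b.1 - a.1 := by linarith
  have ht0 : 0 ≤ t := div_nonneg (by linarith) (by linarith)
  have ht1 : t ≤ 1 := by rw [ht, div_le_one hd]; linarith
  refine ⟨(1 - t) • a + t • b, ⟨1 - t, t, by linarith, ht0, by ring, rfl⟩, ?_, ?_⟩
  · simp only [Prod.fst_add, Prod.smul_fst, smul_eq_mul]
    rw [ht]; field_simp; ring
  · intro q hq
    simp only [Prod.snd_add, Prod.smul_snd, smul_eq_mul, det2, hq, ht]
    field_simp
    ring



def allPos (C : Finset (ℝ × ℝ)) : Prop :=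
  ∀ p ∈ C, ∀ q ∈ C, ∀ r ∈ C, p.1 < q.1 → q.1 < r.1 → 0 < det2 p q r

def allNeg (C : Finset (ℝ × ℝ)) : Prop :=
  ∀ p ∈ C, ∀ q ∈ C, ∀ r ∈ C, p.1 < q.1 → q.1 < r.1 → det2 p q r < 0

def distX (S : Finset (ℝ × ℝ)) : Prop :=
  ∀ p ∈ S, ∀ q ∈ S, p ≠ q → p.1 ≠ q.1

def nondeg (S : Finset (ℝ × ℝ)) : Prop :=
  ∀ p ∈ S, ∀ q ∈ S, ∀ r ∈ S, p.1 < q.1 → q.1 < r.1 → det2 p q r ≠ 0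

def inBox (S : Finset (ℝ × ℝ)) : Prop :=
  ∀ p ∈ S, 0 ≤ p.1 ∧ p.1 ≤ 1 ∧ 0 ≤ p.2 ∧ p.2 ≤ 1

def Good (a b : ℕ) (S : Finset (ℝ × ℝ)) : Prop :=
  inBox S ∧ distX S ∧ nondeg S ∧
    (∀ C ⊆ S, allPos C → C.card ≤ a + 1) ∧
    (∀ C ⊆ S, allNeg C → C.card ≤ b + 1)

/-- affine map with positive diagonal -/
def amap (α β γ δ : ℝ) (p : ℝ × ℝ) : ℝ × ℝ := (α * p.1 + β, γ * p.2 + δ)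

variable {α β γ δ : ℝ}

lemma amap_det2 (hα : 0 < α) (hγ : 0 < γ) (p q r : ℝ × ℝ) :
    det2 (amap α β γ δ p) (amap α β γ δ q) (amap α β γ δ r) = (α * γ) * det2 p q r := by
  simp only [det2, amap]; ring

lemma amap_lt (hα : 0 < α) (p q : ℝ × ℝ) :
    (amap α β γ δ p).1 < (amap α β γ δ q).1 ↔ p.1 < q.1 := by
  simp only [amap]
  constructor
  · intro h; nlinarith
  · intro h; nlinarith

lemma amap_inj (hα : 0 < α) (hγ : 0 < γ) : Function.Injective (amap α β γ δ) := by
  intro p q h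
  simp only [amap, Prod.ext_iff] at h ⊢
  constructor
  · nlinarith [h.1]
  · nlinarith [h.2]

lemma amap_distX (hα : 0 < α) (hγ : 0 < γ) {S : Finset (ℝ × ℝ)} (h : distX S) :
    distX (S.image (amap α β γ δ)) := by
  intro p hp q hq hne
  simp only [Finset.mem_image] at hp hq
  obtain ⟨p0, hp0, rfl⟩ := hp
  obtain ⟨q0, hq0, rfl⟩ := hq
  have h0 : p0 ≠ q0 := fun e => hne (by rw [e])
  have := h p0 hp0 q0 hq0 h0
  simp only [amap]
  intro he
  exact this (by nlinarith [he])

lemma amap_subset_image {S C : Finset (ℝ × ℝ)} (hC : C ⊆ S.image (amap α β γ δ)) :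
    ∃ C0 ⊆ S, C0.image (amap α β γ δ) = C :=
  Finset.subset_image_iff.mp hC

lemma amap_allPos_down (hα : 0 < α) (hγ : 0 < γ) {C : Finset (ℝ × ℝ)}
    (h : allPos (C.image (amap α β γ δ))) : allPos C := by
  intro p hp q hq r hr h1 h2
  have := h _ (Finset.mem_image_of_mem _ hp) _ (Finset.mem_image_of_mem _ hq) _
    (Finset.mem_image_of_mem _ hr) ((amap_lt hα _ _).mpr h1) ((amap_lt hα _ _).mpr h2)
  rw [amap_det2 hα hγ] at this
  by_contra h'
  push_neg at h'
  nlinarith [mul_nonneg (mul_pos hα hγ).le (neg_nonneg.mpr h')]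

lemma amap_allNeg_down (hα : 0 < α) (hγ : 0 < γ) {C : Finset (ℝ × ℝ)}
    (h : allNeg (C.image (amap α β γ δ))) : allNeg C := by
  intro p hp q hq r hr h1 h2
  have := h _ (Finset.mem_image_of_mem _ hp) _ (Finset.mem_image_of_mem _ hq) _
    (Finset.mem_image_of_mem _ hr) ((amap_lt hα _ _).mpr h1) ((amap_lt hα _ _).mpr h2)
  rw [amap_det2 hα hγ] at this
  by_contra h'
  push_neg at h'
  nlinarith [mul_nonneg (mul_pos hα hγ).le h']

lemma amap_nondeg (hα : 0 < α) (hγ : 0 < γ) {S : Finset (ℝ × ℝ)} (h : nondeg S) :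
    nondeg (S.image (amap α β γ δ)) := by
  intro p hp q hq r hr h1 h2
  simp only [Finset.mem_image] at hp hq hr
  obtain ⟨p0, hp0, rfl⟩ := hp
  obtain ⟨q0, hq0, rfl⟩ := hq
  obtain ⟨r0, hr0, rfl⟩ := hr
  rw [amap_det2 hα hγ]
  have := h p0 hp0 q0 hq0 r0 hr0 ((amap_lt hα _ _).mp h1) ((amap_lt hα _ _).mp h2)
  positivity

lemma amap_cupBound (hα : 0 < α) (hγ : 0 < γ) {S : Finset (ℝ × ℝ)} {m : ℕ}
    (h : ∀ C ⊆ S, allPos C → C.card ≤ m) :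
    ∀ C ⊆ S.image (amap α β γ δ), allPos C → C.card ≤ m := by
  intro C hC hpos
  obtain ⟨C0, hC0S, rfl⟩ := amap_subset_image hC
  rw [Finset.card_image_of_injective _ (amap_inj hα hγ)]
  exact h C0 hC0S (amap_allPos_down hα hγ hpos)

lemma amap_capBound (hα : 0 < α) (hγ : 0 < γ) {S : Finset (ℝ × ℝ)} {m : ℕ}
    (h : ∀ C ⊆ S, allNeg C → C.card ≤ m) :
    ∀ C ⊆ S.image (amap α β γ δ), allNeg C → C.card ≤ m := by
  intro C hC hneg
  obtain ⟨C0, hC0S, rfl⟩ := amap_subset_image hC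
  rw [Finset.card_image_of_injective _ (amap_inj hα hγ)]
  exact h C0 hC0S (amap_allNeg_down hα hγ hneg)

/-- minimum gap of x-coordinates -/
lemma exists_gap (S : Finset (ℝ × ℝ)) (h : distX S) :
    ∃ d : ℝ, 0 < d ∧ d ≤ 1 ∧ ∀ p ∈ S, ∀ q ∈ S, p ≠ q → d ≤ |p.1 - q.1| := by
  classical
  set D := (S.offDiag).image (fun pq => |pq.1.1 - pq.2.1|) with hD
  by_cases hne : D.Nonempty
  · refine ⟨min 1 (D.min' hne), ?_, min_le_left _ _, ?_⟩
    · apply lt_min one_pos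
      obtain ⟨⟨p, q⟩, hmem, he⟩ := Finset.mem_image.mp (D.min'_mem hne)
      obtain ⟨hp, hq, hpq⟩ := Finset.mem_offDiag.mp hmem
      rw [← he]
      have := h p hp q hq hpq
      simp only [abs_pos]
      intro hx
      exact this (by linarith [sub_eq_zero.mp hx])
    · intro p hp q hq hpq
      refine le_trans (min_le_right _ _) (D.min'_le _ ?_)
      refine Finset.mem_image.mpr ⟨(p, q), Finset.mem_offDiag.mpr ⟨hp, hq, hpq⟩, rfl⟩
  · refine ⟨1, one_pos, le_refl _, ?_⟩
    intro p hp q hq hpq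
    exfalso
    exact hne ⟨|p.1 - q.1|,
      Finset.mem_image.mpr ⟨(p, q), Finset.mem_offDiag.mpr ⟨hp, hq, hpq⟩, rfl⟩⟩



lemma allPos_mono {C D : Finset (ℝ × ℝ)} (h : C ⊆ D) (hD : allPos D) : allPos C :=
  fun p hp q hq r hr h1 h2 => hD p (h hp) q (h hq) r (h hr) h1 h2

lemma allNeg_mono {C D : Finset (ℝ × ℝ)} (h : C ⊆ D) (hD : allNeg D) : allNeg C :=
  fun p hp q hq r hr h1 h2 => hD p (h hp) q (h hq) r (h hr) h1 h2

set_option maxHeartbeats 1000000 in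
lemma good_combine {a b : ℕ} {A B : Finset (ℝ × ℝ)}
    (hA : Good a (b + 1) A) (hB : Good (a + 1) b B) :
    ∃ S : Finset (ℝ × ℝ), S.card = A.card + B.card ∧ Good (a + 1) (b + 1) S := by
  classical
  obtain ⟨hAbox, hAdx, hAnd, hAcup, hAcap⟩ := hA
  obtain ⟨hBbox, hBdx, hBnd, hBcup, hBcap⟩ := hB
  obtain ⟨dA, hdA0, hdA1, hdA⟩ := exists_gap A hAdx
  obtain ⟨dB, hdB0, hdB1, hdB⟩ := exists_gap B hBdx
  set ε : ℝ := min (min 1 (dA / 12)) (dB / 12) with hε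
  have hε0 : 0 < ε := by
    apply lt_min (lt_min one_pos (by linarith)) (by linarith)
  have hε1 : ε ≤ 1 := le_trans (min_le_left _ _) (min_le_left _ _)
  have hεA : ε ≤ dA / 12 := le_trans (min_le_left _ _) (min_le_right _ _)
  have hεB : ε ≤ dB / 12 := min_le_right _ _
  have h13 : (0:ℝ) < 1/3 := by norm_num
  have hε2 : (0:ℝ) < ε/2 := by linarith
  set A' : Finset (ℝ × ℝ) := A.image (amap (1/3) 0 (ε/2) 0) with hA'
  set B' : Finset (ℝ × ℝ) := B.image (amap (1/3) (2/3) (ε/2) (1/2)) with hB'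
  -- boxes
  have hA'box : ∀ p ∈ A', 0 ≤ p.1 ∧ p.1 ≤ 1/3 ∧ 0 ≤ p.2 ∧ p.2 ≤ ε/2 := by
    intro p hp
    obtain ⟨p0, hp0, rfl⟩ := Finset.mem_image.mp hp
    obtain ⟨h1, h2, h3, h4⟩ := hAbox p0 hp0
    simp only [amap]
    refine ⟨by linarith, by linarith, by nlinarith, by nlinarith⟩
  have hB'box : ∀ p ∈ B', 2/3 ≤ p.1 ∧ p.1 ≤ 1 ∧ 1/2 ≤ p.2 ∧ p.2 ≤ 1/2 + ε/2 := by
    intro p hp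
    obtain ⟨p0, hp0, rfl⟩ := Finset.mem_image.mp hp
    obtain ⟨h1, h2, h3, h4⟩ := hBbox p0 hp0
    simp only [amap]
    refine ⟨by linarith, by linarith, by nlinarith, by nlinarith⟩
  -- gaps
  have hA'gap : ∀ p ∈ A', ∀ q ∈ A', p.1 < q.1 → dA/3 ≤ q.1 - p.1 := by
    intro p hp q hq hlt
    obtain ⟨p0, hp0, rfl⟩ := Finset.mem_image.mp hp
    obtain ⟨q0, hq0, rfl⟩ := Finset.mem_image.mp hq
    have hne : p0 ≠ q0 := by rintro rfl; exact lt_irrefl _ hlt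
    have := hdA p0 hp0 q0 hq0 hne
    simp only [amap] at hlt ⊢
    cases abs_cases (p0.1 - q0.1) with
    | inl h => nlinarith [this, h.1]
    | inr h => nlinarith [this, h.1]
  have hB'gap : ∀ p ∈ B', ∀ q ∈ B', p.1 < q.1 → dB/3 ≤ q.1 - p.1 := by
    intro p hp q hq hlt
    obtain ⟨p0, hp0, rfl⟩ := Finset.mem_image.mp hp
    obtain ⟨q0, hq0, rfl⟩ := Finset.mem_image.mp hq
    have hne : p0 ≠ q0 := by rintro rfl; exact lt_irrefl _ hlt
    have := hdB p0 hp0 q0 hq0 hne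
    simp only [amap] at hlt ⊢
    cases abs_cases (p0.1 - q0.1) with
    | inl h => nlinarith [this, h.1]
    | inr h => nlinarith [this, h.1]
  -- cross x
  have hcross : ∀ p ∈ A', ∀ q ∈ B', p.1 < q.1 := by
    intro p hp q hq
    have := (hA'box p hp).2.1
    have := (hB'box q hq).1
    linarith
  -- key determinant facts
  have key1 : ∀ p ∈ A', ∀ q ∈ A', ∀ s ∈ B', p.1 < q.1 → 0 < det2 p q s := by
    intro p hp q hq s hs hlt
    obtain ⟨hp1, hp2, hp3, hp4⟩ := hA'box p hp
    obtain ⟨hq1, hq2, hq3, hq4⟩ := hA'box q hq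
    obtain ⟨hs1, hs2, hs3, hs4⟩ := hB'box s hs
    have hg := hA'gap p hp q hq hlt
    simp only [det2]
    nlinarith [mul_le_mul hg (by linarith : (1:ℝ)/2 - ε/2 ≤ s.2 - p.2) (by linarith) (by linarith),
      mul_le_mul (by linarith : q.2 - p.2 ≤ ε/2) (by linarith : s.1 - p.1 ≤ 1) (by linarith) (by linarith : (0:ℝ) ≤ ε/2)]
  have key2 : ∀ u ∈ B', ∀ v ∈ B', ∀ w ∈ A', u.1 < v.1 → det2 u v w < 0 := by
    intro u hu v hv w hw hlt
    obtain ⟨hu1, hu2, hu3, hu4⟩ := hB'box u hu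
    obtain ⟨hv1, hv2, hv3, hv4⟩ := hB'box v hv
    obtain ⟨hw1, hw2, hw3, hw4⟩ := hA'box w hw
    have hg := hB'gap u hu v hv hlt
    simp only [det2]
    nlinarith [mul_le_mul hg (by linarith : (1:ℝ)/2 - ε/2 ≤ u.2 - w.2) (by linarith) (by linarith),
      mul_le_mul (by linarith : v.2 - u.2 ≤ ε/2) (by linarith : 0 - (w.1 - u.1) ≤ 1) (by linarith) (by linarith : (0:ℝ) ≤ ε/2)]
  -- disjointness
  have hdisj : Disjoint A' B' := by
    rw [Finset.disjoint_left]
    intro p hp hq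
    have := (hA'box p hp).2.1
    have := (hB'box p hq).1
    linarith
  refine ⟨A' ∪ B', ?_, ?_, ?_, ?_, ?_, ?_⟩
  · rw [Finset.card_union_of_disjoint hdisj, hA', hB',
      Finset.card_image_of_injective _ (amap_inj h13 hε2),
      Finset.card_image_of_injective _ (amap_inj h13 hε2)]
  · -- box
    intro p hp
    rcases Finset.mem_union.mp hp with h | h
    · obtain ⟨h1, h2, h3, h4⟩ := hA'box p h
      exact ⟨by linarith, by linarith, by linarith, by linarith⟩
    · obtain ⟨h1, h2, h3, h4⟩ := hB'box p h
      exact ⟨by linarith, by linarith, by linarith, by linarith⟩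
  · -- distX
    intro p hp q hq hne
    rcases Finset.mem_union.mp hp with h | h <;> rcases Finset.mem_union.mp hq with h' | h'
    · exact amap_distX h13 hε2 hAdx p h q h' hne
    · exact ne_of_lt (hcross p h q h')
    · exact (ne_of_lt (hcross q h' p h)).symm
    · exact amap_distX h13 hε2 hBdx p h q h' hne
  · -- nondeg
    intro p hp q hq r hr h1 h2
    rcases Finset.mem_union.mp hp with hpa | hpb <;>
      rcases Finset.mem_union.mp hq with hqa | hqb <;>
      rcases Finset.mem_union.mp hr with hra | hrb
    · exact amap_nondeg h13 hε2 hAnd p hpa q hqa r hra h1 h2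
    · exact ne_of_gt (key1 p hpa q hqa r hrb h1)
    · exact absurd (hcross r hra q hqb) (by linarith)
    · rw [det2_cyc]
      exact ne_of_lt (key2 q hqb r hrb p hpa (by linarith))
    · exact absurd (hcross q hqa p hpb) (by linarith)
    · exact absurd (hcross q hqa p hpb) (by linarith)
    · exact absurd (hcross r hra p hpb) (by linarith)
    · exact amap_nondeg h13 hε2 hBnd p hpb q hqb r hrb h1 h2
  · -- cup bound
    intro C hC hpos
    set CA := C ∩ A' with hCA
    set CB := C ∩ B' with hCB
    have hCsplit : C = CA ∪ CB := by
      rw [hCA, hCB, ← Finset.inter_union_distrib_left]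
      exact (Finset.inter_eq_left.mpr hC).symm
    have hCdisj : Disjoint CA CB :=
      hdisj.mono Finset.inter_subset_right Finset.inter_subset_right
    have hcard : C.card = CA.card + CB.card := by
      rw [hCsplit, Finset.card_union_of_disjoint hCdisj]
    by_cases hCAne : CA.Nonempty
    · -- CB has at most one point
      have hCB1 : CB.card ≤ 1 := by
        by_contra hgt
        push_neg at hgt
        obtain ⟨b1, hb1, b2, hb2, hne⟩ := Finset.one_lt_card.mp hgt
        obtain ⟨a0, ha0⟩ := hCAne
        have ha0A : a0 ∈ A' := (Finset.mem_inter.mp ha0).2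
        have hb1B : b1 ∈ B' := (Finset.mem_inter.mp hb1).2
        have hb2B : b2 ∈ B' := (Finset.mem_inter.mp hb2).2
        have hxne : b1.1 ≠ b2.1 := amap_distX h13 hε2 hBdx b1 hb1B b2 hb2B hne
        rcases lt_or_gt_of_ne hxne with hlt | hlt
        · have := hpos a0 ((Finset.mem_inter.mp ha0).1) b1 ((Finset.mem_inter.mp hb1).1)
            b2 ((Finset.mem_inter.mp hb2).1) (hcross a0 ha0A b1 hb1B) hlt
          rw [det2_cyc] at this
          exact absurd (key2 b1 hb1B b2 hb2B a0 ha0A hlt) (by linarith)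
        · have := hpos a0 ((Finset.mem_inter.mp ha0).1) b2 ((Finset.mem_inter.mp hb2).1)
            b1 ((Finset.mem_inter.mp hb1).1) (hcross a0 ha0A b2 hb2B) hlt
          rw [det2_cyc] at this
          exact absurd (key2 b2 hb2B b1 hb1B a0 ha0A hlt) (by linarith)
      have hCAbound : CA.card ≤ a + 1 := by
        apply amap_cupBound h13 hε2 hAcup CA (by rw [hCA]; exact Finset.inter_subset_right)
        exact allPos_mono (Finset.inter_subset_left) hpos
      omega
    · -- C ⊆ B'
      have hCA0 : CA = ∅ := Finset.not_nonempty_iff_eq_empty.mp hCAne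
      have hCB' : C ⊆ B' := by
        intro x hx
        rcases Finset.mem_union.mp (hC hx) with h | h
        · exact absurd (Finset.mem_inter.mpr ⟨hx, h⟩) (by rw [← hCA] at *; simp [hCA0])
        · exact h
      have := amap_cupBound h13 hε2 hBcup C hCB' hpos
      omega
  · -- cap bound
    intro C hC hneg
    set CA := C ∩ A' with hCA
    set CB := C ∩ B' with hCB
    have hCsplit : C = CA ∪ CB := by
      rw [hCA, hCB, ← Finset.inter_union_distrib_left]
      exact (Finset.inter_eq_left.mpr hC).symm
    have hCdisj : Disjoint CA CB :=
      hdisj.mono Finset.inter_subset_right Finset.inter_subset_right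
    have hcard : C.card = CA.card + CB.card := by
      rw [hCsplit, Finset.card_union_of_disjoint hCdisj]
    by_cases hCBne : CB.Nonempty
    · have hCA1 : CA.card ≤ 1 := by
        by_contra hgt
        push_neg at hgt
        obtain ⟨a1, ha1, a2, ha2, hne⟩ := Finset.one_lt_card.mp hgt
        obtain ⟨b0, hb0⟩ := hCBne
        have hb0B : b0 ∈ B' := (Finset.mem_inter.mp hb0).2
        have ha1A : a1 ∈ A' := (Finset.mem_inter.mp ha1).2
        have ha2A : a2 ∈ A' := (Finset.mem_inter.mp ha2).2
        have hxne : a1.1 ≠ a2.1 := amap_distX h13 hε2 hAdx a1 ha1A a2 ha2A hne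
        rcases lt_or_gt_of_ne hxne with hlt | hlt
        · have := hneg a1 ((Finset.mem_inter.mp ha1).1) a2 ((Finset.mem_inter.mp ha2).1)
            b0 ((Finset.mem_inter.mp hb0).1) hlt (hcross a2 ha2A b0 hb0B)
          exact absurd (key1 a1 ha1A a2 ha2A b0 hb0B hlt) (by linarith)
        · have := hneg a2 ((Finset.mem_inter.mp ha2).1) a1 ((Finset.mem_inter.mp ha1).1)
            b0 ((Finset.mem_inter.mp hb0).1) hlt (hcross a1 ha1A b0 hb0B)
          exact absurd (key1 a2 ha2A a1 ha1A b0 hb0B hlt) (by linarith)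
      have hCBbound : CB.card ≤ b + 1 := by
        apply amap_capBound h13 hε2 hBcap CB (by rw [hCB]; exact Finset.inter_subset_right)
        exact allNeg_mono (Finset.inter_subset_left) hneg
      omega
    · have hCB0 : CB = ∅ := Finset.not_nonempty_iff_eq_empty.mp hCBne
      have hCA' : C ⊆ A' := by
        intro x hx
        rcases Finset.mem_union.mp (hC hx) with h | h
        · exact h
        · exact absurd (Finset.mem_inter.mpr ⟨hx, h⟩) (by rw [← hCB] at *; simp [hCB0])
      have := amap_capBound h13 hε2 hAcap C hCA' hneg
      omega

lemma good_single (a b : ℕ) : Good a b {((1:ℝ)/2, (1:ℝ)/2)} := by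
  refine ⟨?_, ?_, ?_, ?_, ?_⟩
  · intro p hp
    rw [Finset.mem_singleton] at hp
    subst hp
    norm_num
  · intro p hp q hq hne
    rw [Finset.mem_singleton] at hp hq
    exact absurd (hp.trans hq.symm) hne
  · intro p hp q hq r hr h1 h2
    rw [Finset.mem_singleton] at hp hq
    rw [hp, hq] at h1
    exact absurd h1 (lt_irrefl _)
  · intro C hC _
    calc C.card ≤ _ := Finset.card_le_card hC
    _ ≤ a + 1 := by simp
  · intro C hC _
    calc C.card ≤ _ := Finset.card_le_card hC
    _ ≤ b + 1 := by simp

lemma exists_good : ∀ (N a b : ℕ), a + b ≤ N →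
    ∃ S : Finset (ℝ × ℝ), S.card = (a + b).choose a ∧ Good a b S := by
  intro N
  induction N with
  | zero =>
    intro a b hab
    have ha : a = 0 := by omega
    have hb : b = 0 := by omega
    subst ha; subst hb
    exact ⟨{((1:ℝ)/2, (1:ℝ)/2)}, by simp, good_single 0 0⟩
  | succ N ih =>
    intro a b hab
    match a, b with
    | 0, b =>
      exact ⟨{((1:ℝ)/2, (1:ℝ)/2)}, by simp, good_single 0 b⟩
    | a + 1, 0 =>
      exact ⟨{((1:ℝ)/2, (1:ℝ)/2)}, by simp, good_single (a+1) 0⟩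
    | a + 1, b + 1 =>
      obtain ⟨A, hAcard, hA⟩ := ih a (b + 1) (by omega)
      obtain ⟨B, hBcard, hB⟩ := ih (a + 1) b (by omega)
      obtain ⟨S, hScard, hS⟩ := good_combine hA hB
      refine ⟨S, ?_, hS⟩
      rw [hScard, hAcard, hBcard,
        show (a + 1) + (b + 1) = (a + b + 1) + 1 by omega,
        show a + (b + 1) = a + b + 1 by omega,
        show (a + 1) + b = a + b + 1 by omega]
      rw [Nat.choose_succ_succ (a + b + 1) a]


lemma det2_swap12 (a b c : ℝ × ℝ) : det2 a b c = -det2 b a c := by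
  simp only [det2]; ring

lemma det2_swap13 (a b c : ℝ × ℝ) : det2 a b c = -det2 c b a := by
  simp only [det2]; ring

lemma det2_aba (a b : ℝ × ℝ) : det2 a b a = 0 := by simp only [det2]; ring
lemma det2_abb (a b : ℝ × ℝ) : det2 a b b = 0 := by simp only [det2]; ring

lemma nondeg_all {T : Finset (ℝ × ℝ)} (hdx : distX T) (hnd : nondeg T) :
    ∀ p ∈ T, ∀ q ∈ T, ∀ r ∈ T, p ≠ q → p ≠ r → q ≠ r → det2 p q r ≠ 0 := by
  intro p hp q hq r hr hpq hpr hqr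
  rcases lt_trichotomy p.1 q.1 with h1 | h1 | h1
  · rcases lt_trichotomy q.1 r.1 with h2 | h2 | h2
    · exact hnd p hp q hq r hr h1 h2
    · exact absurd h2 (hdx q hq r hr hqr)
    · rcases lt_trichotomy p.1 r.1 with h3 | h3 | h3
      · -- p < r < q
        rw [det2_swap]
        exact neg_ne_zero.mpr (hnd p hp r hr q hq h3 h2)
      · exact absurd h3 (hdx p hp r hr hpr)
      · -- r < p < q
        rw [det2_cyc, det2_cyc]
        exact hnd r hr p hp q hq h3 h1
  · exact absurd h1 (hdx p hp q hq hpq)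
  · rcases lt_trichotomy p.1 r.1 with h2 | h2 | h2
    · -- q < p < r
      rw [det2_swap12]
      exact neg_ne_zero.mpr (hnd q hq p hp r hr h1 h2)
    · exact absurd h2 (hdx p hp r hr hpr)
    · rcases lt_trichotomy q.1 r.1 with h3 | h3 | h3
      · -- q < r < p
        rw [det2_cyc]
        exact hnd q hq r hr p hp h3 h2
      · exact absurd h3 (hdx q hq r hr hqr)
      · -- r < q < p
        rw [det2_swap13]
        exact neg_ne_zero.mpr (hnd r hr q hq p hp h3 h1)

end ES

set_option maxHeartbeats 2000000 in
/-- For every n ≥ 3 there is a set of 2^(n-2) points in general position with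
no n points in convex position. -/
theorem stmt_6 (n : ℕ) (hn : 3 ≤ n) :
    ∃ P : Finset (ℝ × ℝ), P.card = 2 ^ (n - 2) ∧ GenPos (P : Set (ℝ × ℝ)) ∧
      ¬ ∃ S ⊆ P, S.card = n ∧ ConvexPos (S : Set (ℝ × ℝ)) := by
  classical
  open ES in
  obtain ⟨m, rfl⟩ : ∃ m, n = m + 2 := ⟨n - 2, by omega⟩
  have hm : 1 ≤ m := by omega
  have hex : ∀ i : ℕ, ∃ S : Finset (ℝ × ℝ),
      S.card = (i + (m - i)).choose i ∧ ES.Good i (m - i) S :=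
    fun i => ES.exists_good _ i (m - i) le_rfl
  choose A hAcard hAgood using hex
  choose d hd0 hd1 hdgap using fun i => ES.exists_gap (A i) (hAgood i).2.1
  obtain ⟨δ, hδ0, hδ1, hδd⟩ : ∃ δ : ℝ, 0 < δ ∧ δ ≤ 1 ∧ ∀ i ≤ m, δ ≤ d i := by
    obtain ⟨i0, hi0mem, hi0⟩ := Finset.exists_min_image (Finset.range (m+1)) d
      ⟨0, by simp⟩
    exact ⟨min 1 (d i0), lt_min one_pos (hd0 i0), min_le_left _ _,
      fun i hi => le_trans (min_le_right _ _) (hi0 i (Finset.mem_range.mpr (by omega)))⟩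
  set ε : ℝ := δ/4 with hεdef
  have hε0 : 0 < ε := by rw [hεdef]; linarith
  have hε1 : ε ≤ 1 := by rw [hεdef]; linarith
  set W : ℝ := 4*m + 8 with hWdef
  have hW12 : (12:ℝ) ≤ W := by
    rw [hWdef]
    have : (1:ℝ) ≤ m := by exact_mod_cast hm
    linarith
  have hW1 : (1:ℝ) ≤ W := by linarith
  have hWpos : (0:ℝ) < W := by linarith
  have hWge : ∀ i : ℕ, W ≤ W^(i+1) := by
    intro i
    calc W = W^1 := (pow_one W).symm
    _ ≤ W^(i+1) := pow_le_pow_right₀ hW1 (by omega)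
  have hWmono : ∀ i j : ℕ, i ≤ j → W^(i+1) ≤ W^(j+1) :=
    fun i j hij => pow_le_pow_right₀ hW1 (by omega)
  have hWstep : ∀ i j : ℕ, i < j → W^(i+1) * W ≤ W^(j+1) := by
    intro i j hij
    calc W^(i+1) * W = W^(i+2) := by ring
    _ ≤ W^(j+1) := pow_le_pow_right₀ hW1 (by omega)
  set blk : ℕ → Finset (ℝ × ℝ) := fun i => (A i).image (ES.amap 1 (4*i) ε (W^(i+1)))
    with hblkdef
  -- block boxes
  have F0 : ∀ i : ℕ, ∀ p ∈ blk i, (4*i:ℝ) ≤ p.1 ∧ p.1 ≤ 4*i+1 ∧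
      W^(i+1) ≤ p.2 ∧ p.2 ≤ W^(i+1) + ε := by
    intro i p hp
    obtain ⟨p0, hp0, rfl⟩ := Finset.mem_image.mp hp
    obtain ⟨h1, h2, h3, h4⟩ := (hAgood i).1 p0 hp0
    simp only [ES.amap]
    refine ⟨by linarith, by linarith, by nlinarith, by nlinarith⟩
  have F1 : ∀ i ≤ m, ∀ p ∈ blk i, ∀ q ∈ blk i, p.1 < q.1 → δ ≤ q.1 - p.1 := by
    intro i hi p hp q hq hlt
    obtain ⟨p0, hp0, rfl⟩ := Finset.mem_image.mp hp
    obtain ⟨q0, hq0, rfl⟩ := Finset.mem_image.mp hq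
    have hne : p0 ≠ q0 := by rintro rfl; exact lt_irrefl _ hlt
    have hgap := le_trans (hδd i hi) (hdgap i p0 hp0 q0 hq0 hne)
    simp only [ES.amap] at hlt ⊢
    cases abs_cases (p0.1 - q0.1) with
    | inl hc => nlinarith [hgap, hc.1]
    | inr hc => nlinarith [hgap, hc.1]
  have F5 : ∀ i j : ℕ, i < j → ∀ p ∈ blk i, ∀ q ∈ blk j, p.1 < q.1 := by
    intro i j hij p hp q hq
    have h1 := (F0 i p hp).2.1
    have h2 := (F0 j q hq).1
    have : (4*i:ℝ) + 1 < 4*j := by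
      have : (i:ℝ) + 1 ≤ j := by exact_mod_cast hij
      linarith
    linarith
  have F2 : ∀ i j : ℕ, i < j → j ≤ m → ∀ p ∈ blk i, ∀ q ∈ blk i, ∀ s ∈ blk j,
      p.1 < q.1 → 0 < det2 p q s := by
    intro i j hij hjm p hp q hq s hs hlt
    obtain ⟨hp1, hp2, hp3, hp4⟩ := F0 i p hp
    obtain ⟨hq1, hq2, hq3, hq4⟩ := F0 i q hq
    obtain ⟨hs1, hs2, hs3, hs4⟩ := F0 j s hs
    have hg := F1 i (by omega) p hp q hq hlt
    have hstep := hWstep i j hij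
    have hge := hWge i
    have hgej := hWge j
    have him : (i:ℝ) ≤ m := by exact_mod_cast (by omega : i ≤ m)
    have hjm' : (j:ℝ) ≤ m := by exact_mod_cast hjm
    have hij' : (i:ℝ) + 1 ≤ j := by exact_mod_cast hij
    have hi0 : (0:ℝ) ≤ i := Nat.cast_nonneg i
    simp only [det2]
    -- s.2 - p.2 ≥ W^(j+1) - W^(i+1) - ε ≥ W^(i+1)(W-1) - ε ≥ W(W-1) - 1 ≥ 11*W
    have hbig : W * (W - 1) - 1 ≤ s.2 - p.2 := by nlinarith
    have hx : s.1 - p.1 ≤ W := by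
      rw [hWdef]
      have : (j:ℝ) ≤ m := hjm'
      linarith
    have hA : δ * (W*(W-1)-1) ≤ (q.1-p.1)*(s.2-p.2) :=
      mul_le_mul hg hbig (by nlinarith) (by linarith)
    have hB : (q.2-p.2)*(s.1-p.1) ≤ ε*W :=
      mul_le_mul (by linarith) hx (by linarith) (by linarith)
    have hC : ε*W < δ * (W*(W-1)-1) := by
      rw [hεdef]
      nlinarith [mul_pos hδ0 (show (0:ℝ) < W*(W-1)-1-W/4 by nlinarith)]
    linarith
  have F3 : ∀ i j : ℕ, i < j → j ≤ m → ∀ u ∈ blk j, ∀ v ∈ blk j, ∀ w ∈ blk i,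
      u.1 < v.1 → det2 u v w < 0 := by
    intro i j hij hjm u hu v hv w hw hlt
    obtain ⟨hu1, hu2, hu3, hu4⟩ := F0 j u hu
    obtain ⟨hv1, hv2, hv3, hv4⟩ := F0 j v hv
    obtain ⟨hw1, hw2, hw3, hw4⟩ := F0 i w hw
    have hg := F1 j hjm u hu v hv hlt
    have hstep := hWstep i j hij
    have hge := hWge i
    have him : (i:ℝ) ≤ m := by exact_mod_cast (by omega : i ≤ m)
    have hjm' : (j:ℝ) ≤ m := by exact_mod_cast hjm
    have hij' : (i:ℝ) + 1 ≤ j := by exact_mod_cast hij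
    have hi0 : (0:ℝ) ≤ i := Nat.cast_nonneg i
    simp only [det2]
    have hbig : W * (W - 1) - 1 ≤ u.2 - w.2 := by nlinarith
    have hx : 0 - (w.1 - u.1) ≤ W := by
      rw [hWdef]
      linarith
    have hA : δ * (W*(W-1)-1) ≤ (v.1-u.1)*(u.2-w.2) :=
      mul_le_mul hg hbig (by nlinarith) (by linarith)
    have hB : (v.2-u.2)*(0-(w.1-u.1)) ≤ ε*W :=
      mul_le_mul (by linarith) hx (by linarith) (by linarith)
    have hC : ε*W < δ * (W*(W-1)-1) := by
      rw [hεdef]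
      nlinarith [mul_pos hδ0 (show (0:ℝ) < W*(W-1)-1-W/4 by nlinarith)]
    nlinarith
  have F4 : ∀ i j k : ℕ, i < j → j < k → k ≤ m → ∀ a ∈ blk i, ∀ b ∈ blk j, ∀ c ∈ blk k,
      0 < det2 a b c := by
    intro i j k hij hjk hkm a ha b hb c hc
    obtain ⟨ha1, ha2, ha3, ha4⟩ := F0 i a ha
    obtain ⟨hb1, hb2, hb3, hb4⟩ := F0 j b hb
    obtain ⟨hc1, hc2, hc3, hc4⟩ := F0 k c hc
    have hstepik := hWstep j k hjk
    have hmonoij := hWmono i j (by omega)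
    have hgej := hWge j
    have hgei := hWge i
    have him : (i:ℝ) ≤ m := by exact_mod_cast (by omega : i ≤ m)
    have hjm' : (j:ℝ) ≤ m := by exact_mod_cast (by omega : j ≤ m)
    have hkm' : (k:ℝ) ≤ m := by exact_mod_cast hkm
    have hij' : (i:ℝ) + 1 ≤ j := by exact_mod_cast hij
    have hjk' : (j:ℝ) + 1 ≤ k := by exact_mod_cast hjk
    have hi0 : (0:ℝ) ≤ i := Nat.cast_nonneg i
    simp only [det2]
    -- b.1 - a.1 ≥ 3, c.2 - a.2 ≥ W*h_j - h_j - 1, b.2 - a.2 ≤ h_j + 1, c.1 - a.1 ≤ W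
    have h1 : (3:ℝ) ≤ b.1 - a.1 := by linarith
    have h2 : W * W^(j+1) - W^(j+1) - 1 ≤ c.2 - a.2 := by nlinarith
    have h3 : b.2 - a.2 ≤ W^(j+1) + 1 := by nlinarith
    have hstepij := hWstep i j hij
    have hWi : (0:ℝ) ≤ W^(i+1) := by positivity
    have h3' : 0 ≤ b.2 - a.2 := by
      nlinarith [mul_nonneg (by linarith : (0:ℝ) ≤ W - 12) hWi]
    have h4 : c.1 - a.1 ≤ W := by rw [hWdef]; linarith
    have h4' : 0 ≤ c.1 - a.1 := by
      have := F5 i k (by omega) a ha c hc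
      linarith
    have hWj : (0:ℝ) ≤ W^(j+1) := by positivity
    have hWWj : 12 * W^(j+1) ≤ W * W^(j+1) := by
      nlinarith [mul_nonneg (by linarith : (0:ℝ) ≤ W - 12) hWj]
    have hA : 3 * (W * W^(j+1) - W^(j+1) - 1) ≤ (b.1-a.1)*(c.2-a.2) :=
      mul_le_mul h1 h2 (by nlinarith) (by linarith)
    have hB : (b.2-a.2)*(c.1-a.1) ≤ (W^(j+1)+1)*W :=
      mul_le_mul h3 h4 h4' (by positivity)
    nlinarith [mul_nonneg (by linarith : (0:ℝ) ≤ W - 12) hWj]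
  -- block-level facts
  have blkdx : ∀ i, ES.distX (blk i) := fun i =>
    ES.amap_distX one_pos hε0 (hAgood i).2.1
  have blknd : ∀ i, ES.nondeg (blk i) := fun i =>
    ES.amap_nondeg one_pos hε0 (hAgood i).2.2.1
  have blkcup : ∀ i, ∀ C ⊆ blk i, ES.allPos C → C.card ≤ i + 1 := fun i =>
    ES.amap_cupBound one_pos hε0 (hAgood i).2.2.2.1
  have blkcap : ∀ i, ∀ C ⊆ blk i, ES.allNeg C → C.card ≤ (m - i) + 1 := fun i =>
    ES.amap_capBound one_pos hε0 (hAgood i).2.2.2.2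
  have blkcard : ∀ i, i ≤ m → (blk i).card = m.choose i := by
    intro i hi
    show ((A i).image _).card = _
    rw [Finset.card_image_of_injective _ (ES.amap_inj one_pos hε0), hAcard,
      show i + (m - i) = m by omega]
  set T := (Finset.range (m+1)).biUnion blk with hT
  have blkdisj : ∀ i ∈ Finset.range (m+1), ∀ j ∈ Finset.range (m+1), i ≠ j →
      Disjoint (blk i) (blk j) := by
    intro i _ j _ hij
    rw [Finset.disjoint_left]
    intro p hpi hpj
    rcases lt_or_gt_of_ne hij with h | h
    · exact lt_irrefl _ (F5 i j h p hpi p hpj)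
    · exact lt_irrefl _ (F5 j i h p hpj p hpi)
  have Tcard : T.card = 2^m := by
    rw [hT, Finset.card_biUnion blkdisj]
    rw [Finset.sum_congr rfl (fun i hi => blkcard i (by
      have := Finset.mem_range.mp hi; omega))]
    exact Nat.sum_range_choose m
  have Tmem : ∀ p ∈ T, ∃ i, i ≤ m ∧ p ∈ blk i := by
    intro p hp
    obtain ⟨i, hi, hpi⟩ := Finset.mem_biUnion.mp hp
    exact ⟨i, by have := Finset.mem_range.mp hi; omega, hpi⟩
  have Tdx : ES.distX T := by
    intro p hp q hq hne
    obtain ⟨i, hi, hpi⟩ := Tmem p hp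
    obtain ⟨j, hj, hqj⟩ := Tmem q hq
    rcases lt_trichotomy i j with h | h | h
    · exact ne_of_lt (F5 i j h p hpi q hqj)
    · subst h; exact blkdx i p hpi q hqj hne
    · exact (ne_of_lt (F5 j i h q hqj p hpi)).symm
  have Tnd : ES.nondeg T := by
    intro p hp q hq r hr h1 h2
    obtain ⟨i, hi, hpi⟩ := Tmem p hp
    obtain ⟨j, hj, hqj⟩ := Tmem q hq
    obtain ⟨k, hk, hrk⟩ := Tmem r hr
    have hij : i ≤ j := by
      by_contra hc
      push_neg at hc
      exact absurd (F5 j i hc q hqj p hpi) (by linarith)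
    have hjk : j ≤ k := by
      by_contra hc
      push_neg at hc
      exact absurd (F5 k j hc r hrk q hqj) (by linarith)
    rcases eq_or_lt_of_le hij with rfl | hlt1
    · rcases eq_or_lt_of_le hjk with rfl | hlt2
      · exact blknd i p hpi q hqj r hrk h1 h2
      · exact ne_of_gt (F2 i k hlt2 hk p hpi q hqj r hrk h1)
    · rcases eq_or_lt_of_le hjk with rfl | hlt2
      · rw [ES.det2_cyc]
        exact ne_of_lt (F3 i j hlt1 hj q hqj r hrk p hpi h2)
      · exact ne_of_gt (F4 i j k hlt1 hlt2 hk p hpi q hqj r hrk)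
  refine ⟨T, ?_, ?_, ?_⟩
  · rw [Tcard, show m + 2 - 2 = m by omega]
  · intro p hp q hq r hr hpq hpr hqr
    exact ES.not_collinear_of_det2
      (ES.nondeg_all Tdx Tnd p hp q hq r hr hpq hpr hqr)
  · rintro ⟨X, hXT, hXcard, hXcp⟩
    have hXmem : ∀ p ∈ X, ∃ i, i ≤ m ∧ p ∈ blk i := fun p hp => Tmem p (hXT hp)
    have hullc : ∀ q ∈ X, ∀ a b c : ℝ × ℝ, a ∈ X → b ∈ X → c ∈ X →
        a ≠ q → b ≠ q → c ≠ q →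
        q ∈ convexHull ℝ ({a, b, c} : Set (ℝ × ℝ)) → False := by
      intro q hq a b c ha hb hc hna hnb hnc hmem
      refine hXcp q (Finset.mem_coe.mpr hq) (convexHull_mono ?_ hmem)
      intro x hx
      simp only [Set.mem_insert_iff, Set.mem_singleton_iff] at hx
      rcases hx with rfl | rfl | rfl
      · exact ⟨Finset.mem_coe.mpr ha, by simp [hna]⟩
      · exact ⟨Finset.mem_coe.mpr hb, by simp [hnb]⟩
      · exact ⟨Finset.mem_coe.mpr hc, by simp [hnc]⟩
    set I := (Finset.range (m+1)).filter (fun i => (X ∩ blk i).Nonempty) with hI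
    have hXne : X.Nonempty := by
      rw [← Finset.card_pos, hXcard]; omega
    have hmemI : ∀ p ∈ X, ∀ i, i ≤ m → p ∈ blk i → i ∈ I := by
      intro p hp i hi hpi
      exact Finset.mem_filter.mpr ⟨Finset.mem_range.mpr (by omega),
        ⟨p, Finset.mem_inter.mpr ⟨hp, hpi⟩⟩⟩
    have hIne : I.Nonempty := by
      obtain ⟨p, hp⟩ := hXne
      obtain ⟨i, hi, hpi⟩ := hXmem p hp
      exact ⟨i, hmemI p hp i hi hpi⟩
    set i1 := I.min' hIne with hi1def
    set it := I.max' hIne with hitdef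
    have hi1I : i1 ∈ I := I.min'_mem hIne
    have hitI : it ∈ I := I.max'_mem hIne
    have hi1m : i1 ≤ m := by
      have := (Finset.mem_filter.mp hi1I).1
      have := Finset.mem_range.mp this
      omega
    have hitm : it ≤ m := by
      have := (Finset.mem_filter.mp hitI).1
      have := Finset.mem_range.mp this
      omega
    have hIm : ∀ i ∈ I, i ≤ m := by
      intro i hi
      have := Finset.mem_range.mp (Finset.mem_filter.mp hi).1
      omega
    by_cases h1t : i1 = it
    · -- single block case
      have hXblk : X ⊆ blk i1 := by
        intro p hp
        obtain ⟨i, hi, hpi⟩ := hXmem p hp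
        have hiI : i ∈ I := hmemI p hp i hi hpi
        have : i = i1 := le_antisymm (h1t ▸ I.le_max' i hiI) (I.min'_le i hiI)
        exact this ▸ hpi
      obtain ⟨x1, hx1X, hx1min⟩ := X.exists_min_image (fun p => p.1) hXne
      obtain ⟨xn, hxnX, hxnmax⟩ := X.exists_max_image (fun p => p.1) hXne
      have hxdist : ∀ p ∈ X, ∀ q ∈ X, p ≠ q → p.1 ≠ q.1 :=
        fun p hp q hq hne => Tdx p (hXT hp) q (hXT hq) hne
      have hx1s : ∀ p ∈ X, p ≠ x1 → x1.1 < p.1 := fun p hp hne =>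
        lt_of_le_of_ne (hx1min p hp) (hxdist x1 hx1X p hp hne.symm)
      have hxns : ∀ p ∈ X, p ≠ xn → p.1 < xn.1 := fun p hp hne =>
        lt_of_le_of_ne (hxnmax p hp) (hxdist p hp xn hxnX hne)
      have hx1xn : x1 ≠ xn := by
        intro h
        have hsub : X ⊆ {x1} := by
          intro p hp
          rw [Finset.mem_singleton]
          by_contra hne
          have h1 := hx1s p hp hne
          have h2 := hxns p hp (fun e => hne (e.trans h.symm))
          rw [← h] at h2
          linarith
        have := Finset.card_le_card hsub
        rw [hXcard, Finset.card_singleton] at this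
        omega
      have hx1xn' : x1.1 < xn.1 := hx1s xn hxnX (Ne.symm hx1xn)
      set U := X.filter (fun p => 0 ≤ det2 x1 xn p) with hU
      set L := X.filter (fun p => det2 x1 xn p ≤ 0) with hL
      have hUsub : U ⊆ X := Finset.filter_subset _ _
      have hLsub : L ⊆ X := Finset.filter_subset _ _
      have hUL : U ∪ L = X := by
        apply Finset.Subset.antisymm (Finset.union_subset hUsub hLsub)
        intro p hp
        rcases le_total 0 (det2 x1 xn p) with h | h
        · exact Finset.mem_union_left _ (Finset.mem_filter.mpr ⟨hp, h⟩)
        · exact Finset.mem_union_right _ (Finset.mem_filter.mpr ⟨hp, h⟩)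
      have hULi : U ∩ L = {x1, xn} := by
        apply Finset.Subset.antisymm
        · intro p hp
          obtain ⟨hpU, hpL⟩ := Finset.mem_inter.mp hp
          have hpX := hUsub hpU
          have h0 : det2 x1 xn p = 0 :=
            le_antisymm (Finset.mem_filter.mp hpL).2 (Finset.mem_filter.mp hpU).2
          by_contra hc
          simp only [Finset.mem_insert, Finset.mem_singleton] at hc
          push_neg at hc
          have h1 := hx1s p hpX hc.1
          have h2 := hxns p hpX hc.2
          have := Tnd x1 (hXT hx1X) p (hXT hpX) xn (hXT hxnX) h1 h2
          rw [ES.det2_swap] at h0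
          exact this (by linarith [neg_eq_zero.mp h0])
        · intro p hp
          simp only [Finset.mem_insert, Finset.mem_singleton] at hp
          rcases hp with rfl | rfl
          · exact Finset.mem_inter.mpr ⟨Finset.mem_filter.mpr ⟨hx1X, by rw [ES.det2_aba]⟩,
              Finset.mem_filter.mpr ⟨hx1X, by rw [ES.det2_aba]⟩⟩
          · exact Finset.mem_inter.mpr ⟨Finset.mem_filter.mpr ⟨hxnX, by rw [ES.det2_abb]⟩,
              Finset.mem_filter.mpr ⟨hxnX, by rw [ES.det2_abb]⟩⟩
      have hcards : U.card + L.card = (m + 2) + 2 := by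
        have := Finset.card_union_add_card_inter U L
        rw [hUL, hULi, hXcard] at this
        rw [← this, Finset.card_insert_of_notMem (by simpa using hx1xn),
          Finset.card_singleton]
      -- U is a cap
      have hUcap : ES.allNeg U := by
        intro p hp q hq r hr h1 h2
        have hpX := hUsub hp
        have hqX := hUsub hq
        have hrX := hUsub hr
        have hne := Tnd p (hXT hpX) q (hXT hqX) r (hXT hrX) h1 h2
        rcases lt_or_gt_of_ne hne with h | h
        · exact h
        exfalso
        obtain ⟨w, hwseg, hwx, hwkey⟩ := ES.exists_seg_at_x (h1.trans h2)
          (le_of_lt h1) (le_of_lt h2)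
        obtain ⟨w', hw'seg, hw'x, hw'key⟩ := ES.exists_seg_at_x hx1xn'
          (hx1min q hqX) (hxnmax q hqX)
        have hq2w : q.2 < w.2 := by
          have := hwkey q rfl
          rw [ES.det2_swap] at this
          nlinarith
        have hw'q2 : w'.2 ≤ q.2 := by
          have := hw'key q rfl
          have hge : 0 ≤ det2 x1 xn q := (Finset.mem_filter.mp hq).2
          nlinarith
        have hqseg : q ∈ segment ℝ w' w :=
          ES.mem_segment_vert hw'x hwx hw'q2 (le_of_lt hq2w)
        have hq1 : q ≠ x1 := by
          intro e
          have := hx1min p hpX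
          rw [← e] at this
          linarith
        have hqn : q ≠ xn := by
          intro e
          have := hxnmax r hrX
          rw [← e] at this
          linarith
        have hqp : p ≠ q := fun e => absurd (congrArg Prod.fst e) (ne_of_lt h1)
        have hqr : r ≠ q := fun e => absurd (congrArg Prod.fst e) (ne_of_gt h2)
        have hsub1 : x1 ∈ ((X : Set (ℝ × ℝ)) \ {q}) :=
          ⟨Finset.mem_coe.mpr hx1X, by simp [Ne.symm hq1]⟩
        have hsubn : xn ∈ ((X : Set (ℝ × ℝ)) \ {q}) :=
          ⟨Finset.mem_coe.mpr hxnX, by simp [Ne.symm hqn]⟩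
        have hsubp : p ∈ ((X : Set (ℝ × ℝ)) \ {q}) :=
          ⟨Finset.mem_coe.mpr hpX, by simp [hqp]⟩
        have hsubr : r ∈ ((X : Set (ℝ × ℝ)) \ {q}) :=
          ⟨Finset.mem_coe.mpr hrX, by simp [hqr]⟩
        have hCvx := convex_convexHull ℝ ((X : Set (ℝ × ℝ)) \ {q})
        have hw'h : w' ∈ convexHull ℝ ((X : Set (ℝ × ℝ)) \ {q}) :=
          (segment_subset_convexHull hsub1 hsubn) hw'seg
        have hwh : w ∈ convexHull ℝ ((X : Set (ℝ × ℝ)) \ {q}) :=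
          (segment_subset_convexHull hsubp hsubr) hwseg
        exact hXcp q (Finset.mem_coe.mpr hqX) (hCvx.segment_subset hw'h hwh hqseg)
      -- L is a cup
      have hLcup : ES.allPos L := by
        intro p hp q hq r hr h1 h2
        have hpX := hLsub hp
        have hqX := hLsub hq
        have hrX := hLsub hr
        have hne := Tnd p (hXT hpX) q (hXT hqX) r (hXT hrX) h1 h2
        rcases lt_or_gt_of_ne hne with h | h
        swap
        · exact h
        exfalso
        obtain ⟨w, hwseg, hwx, hwkey⟩ := ES.exists_seg_at_x (h1.trans h2)
          (le_of_lt h1) (le_of_lt h2)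
        obtain ⟨w', hw'seg, hw'x, hw'key⟩ := ES.exists_seg_at_x hx1xn'
          (hx1min q hqX) (hxnmax q hqX)
        have hq2w : w.2 < q.2 := by
          have := hwkey q rfl
          rw [ES.det2_swap] at this
          nlinarith
        have hw'q2 : q.2 ≤ w'.2 := by
          have := hw'key q rfl
          have hge : det2 x1 xn q ≤ 0 := (Finset.mem_filter.mp hq).2
          nlinarith
        have hqseg : q ∈ segment ℝ w w' :=
          ES.mem_segment_vert hwx hw'x (le_of_lt hq2w) hw'q2
        have hq1 : q ≠ x1 := by
          intro e
          have := hx1min p hpX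
          rw [← e] at this
          linarith
        have hqn : q ≠ xn := by
          intro e
          have := hxnmax r hrX
          rw [← e] at this
          linarith
        have hqp : p ≠ q := fun e => absurd (congrArg Prod.fst e) (ne_of_lt h1)
        have hqr : r ≠ q := fun e => absurd (congrArg Prod.fst e) (ne_of_gt h2)
        have hsub1 : x1 ∈ ((X : Set (ℝ × ℝ)) \ {q}) :=
          ⟨Finset.mem_coe.mpr hx1X, by simp [Ne.symm hq1]⟩
        have hsubn : xn ∈ ((X : Set (ℝ × ℝ)) \ {q}) :=
          ⟨Finset.mem_coe.mpr hxnX, by simp [Ne.symm hqn]⟩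
        have hsubp : p ∈ ((X : Set (ℝ × ℝ)) \ {q}) :=
          ⟨Finset.mem_coe.mpr hpX, by simp [hqp]⟩
        have hsubr : r ∈ ((X : Set (ℝ × ℝ)) \ {q}) :=
          ⟨Finset.mem_coe.mpr hrX, by simp [hqr]⟩
        have hCvx := convex_convexHull ℝ ((X : Set (ℝ × ℝ)) \ {q})
        have hw'h : w' ∈ convexHull ℝ ((X : Set (ℝ × ℝ)) \ {q}) :=
          (segment_subset_convexHull hsub1 hsubn) hw'seg
        have hwh : w ∈ convexHull ℝ ((X : Set (ℝ × ℝ)) \ {q}) :=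
          (segment_subset_convexHull hsubp hsubr) hwseg
        exact hXcp q (Finset.mem_coe.mpr hqX) (hCvx.segment_subset hwh hw'h hqseg)
      have hUbound : U.card ≤ (m - i1) + 1 :=
        blkcap i1 U (fun p hp => hXblk (hUsub hp)) hUcap
      have hLbound : L.card ≤ i1 + 1 :=
        blkcup i1 L (fun p hp => hXblk (hLsub hp)) hLcup
      omega
    · -- at least two blocks
      have hi1lt : i1 < it := lt_of_le_of_ne (I.min'_le it hitI) h1t
      obtain ⟨s', hs'⟩ := (Finset.mem_filter.mp hi1I).2
      obtain ⟨s, hs⟩ := (Finset.mem_filter.mp hitI).2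
      obtain ⟨hs'X, hs'blk⟩ := Finset.mem_inter.mp hs'
      obtain ⟨hsX, hsblk⟩ := Finset.mem_inter.mp hs
      -- decomposition of X over I
      have hXbi : X = I.biUnion (fun i => X ∩ blk i) := by
        apply Finset.Subset.antisymm
        · intro p hp
          obtain ⟨i, hi, hpi⟩ := hXmem p hp
          exact Finset.mem_biUnion.mpr ⟨i, hmemI p hp i hi hpi,
            Finset.mem_inter.mpr ⟨hp, hpi⟩⟩
        · intro p hp
          obtain ⟨i, _, hpi⟩ := Finset.mem_biUnion.mp hp
          exact (Finset.mem_inter.mp hpi).1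
      have hXsum : X.card = ∑ i ∈ I, (X ∩ blk i).card := by
        rw [hXbi, Finset.card_biUnion]
        · rw [← hXbi]
        intro i hi j hj hij
        exact Finset.disjoint_of_subset_left Finset.inter_subset_right
          (Finset.disjoint_of_subset_right Finset.inter_subset_right
            (blkdisj i (Finset.mem_range.mpr (by have := hIm i hi; omega))
              j (Finset.mem_range.mpr (by have := hIm j hj; omega)) hij))
      -- first block is a cup
      have hbound1 : (X ∩ blk i1).card ≤ i1 + 1 := by
        apply blkcup i1 _ Finset.inter_subset_right
        intro p hp q hq r hr h1 h2
        obtain ⟨hpX, hpB⟩ := Finset.mem_inter.mp hp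
        obtain ⟨hqX, hqB⟩ := Finset.mem_inter.mp hq
        obtain ⟨hrX, hrB⟩ := Finset.mem_inter.mp hr
        have hne := blknd i1 p hpB q hqB r hrB h1 h2
        rcases lt_or_gt_of_ne hne with h | h
        swap
        · exact h
        exfalso
        have hD : 0 < det2 p r s := F2 i1 it hi1lt hitm p hpB r hrB s hsblk (h1.trans h2)
        have hd1 : 0 < det2 q r s := F2 i1 it hi1lt hitm q hqB r hrB s hsblk h2
        have hd2 : 0 < det2 p q s := F2 i1 it hi1lt hitm p hpB q hqB s hsblk h1
        have hd3 : 0 < det2 p r q := by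
          rw [ES.det2_swap] at h
          linarith
        have hmem := ES.mem_triangle (a := p) (b := r) (c := s) (q := q)
          (ne_of_gt hD) (by nlinarith) (by nlinarith) (by nlinarith)
        have hps : p ≠ q := fun e => absurd (congrArg Prod.fst e) (ne_of_lt h1)
        have hrs : r ≠ q := fun e => absurd (congrArg Prod.fst e) (ne_of_gt h2)
        have hss : s ≠ q := by
          intro e
          have := F5 i1 it hi1lt q hqB s hsblk
          rw [e] at this
          exact lt_irrefl _ this
        exact hullc q hqX p r s hpX hrX hsX hps hrs hss hmem
      -- last block is a cap
      have hboundt : (X ∩ blk it).card ≤ (m - it) + 1 := by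
        apply blkcap it _ Finset.inter_subset_right
        intro p hp q hq r hr h1 h2
        obtain ⟨hpX, hpB⟩ := Finset.mem_inter.mp hp
        obtain ⟨hqX, hqB⟩ := Finset.mem_inter.mp hq
        obtain ⟨hrX, hrB⟩ := Finset.mem_inter.mp hr
        have hne := blknd it p hpB q hqB r hrB h1 h2
        rcases lt_or_gt_of_ne hne with h | h
        · exact h
        exfalso
        have hD : det2 p r s' < 0 := F3 i1 it hi1lt hitm p hpB r hrB s' hs'blk (h1.trans h2)
        have hd1 : det2 q r s' < 0 := F3 i1 it hi1lt hitm q hqB r hrB s' hs'blk h2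
        have hd2 : det2 p q s' < 0 := F3 i1 it hi1lt hitm p hpB q hqB s' hs'blk h1
        have hd3 : det2 p r q < 0 := by
          rw [ES.det2_swap] at h
          linarith
        have hmem := ES.mem_triangle (a := p) (b := r) (c := s') (q := q)
          (ne_of_lt hD) (by nlinarith) (by nlinarith) (by nlinarith)
        have hps : p ≠ q := fun e => absurd (congrArg Prod.fst e) (ne_of_lt h1)
        have hrs : r ≠ q := fun e => absurd (congrArg Prod.fst e) (ne_of_gt h2)
        have hss : s' ≠ q := by
          intro e
          have := F5 i1 it hi1lt s' hs'blk q hqB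
          rw [e] at this
          exact lt_irrefl _ this
        exact hullc q hqX p r s' hpX hrX hs'X hps hrs hss hmem
      -- middle blocks have at most one point
      have hboundmid : ∀ i ∈ I, i1 < i → i < it → (X ∩ blk i).card ≤ 1 := by
        intro i hiI hlow hhigh
        have him := hIm i hiI
        rw [Finset.card_le_one]
        intro p hp q hq
        obtain ⟨hpX, hpB⟩ := Finset.mem_inter.mp hp
        obtain ⟨hqX, hqB⟩ := Finset.mem_inter.mp hq
        by_contra hne
        have hkey : ∀ u v : ℝ × ℝ, u ∈ X → v ∈ X → u ∈ blk i → v ∈ blk i →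
            u.1 < v.1 → False := by
          intro u v huX hvX huB hvB hlt
          have hD : 0 < det2 s' v s := F4 i1 i it hlow hhigh hitm s' hs'blk v hvB s hsblk
          have hd1 : 0 < det2 u v s := F2 i it hhigh hitm u huB v hvB s hsblk hlt
          have hd2 : 0 < det2 s' u s := F4 i1 i it hlow hhigh hitm s' hs'blk u huB s hsblk
          have hd3 : 0 < det2 s' v u := by
            have := F3 i1 i hlow him u huB v hvB s' hs'blk hlt
            rw [ES.det2_swap13] at this
            linarith
          have hmem := ES.mem_triangle (a := s') (b := v) (c := s) (q := u)
            (ne_of_gt hD) (by nlinarith) (by nlinarith) (by nlinarith)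
          have h1 : s' ≠ u := by
            intro e
            have := F5 i1 i hlow s' hs'blk u huB
            rw [e] at this
            exact lt_irrefl _ this
          have h2 : v ≠ u := fun e => absurd (congrArg Prod.fst e) (ne_of_gt hlt)
          have h3 : s ≠ u := by
            intro e
            have := F5 i it hhigh u huB s hsblk
            rw [← e] at this
            exact lt_irrefl _ this
          exact hullc u huX s' v s hs'X hvX hsX h1 h2 h3 hmem
        have hxne : p.1 ≠ q.1 := blkdx i p hpB q hqB hne
        rcases lt_or_gt_of_ne hxne with hlt | hlt
        · exact hkey p q hpX hqX hpB hqB hlt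
        · exact hkey q p hqX hpX hqB hpB hlt
      -- sum it all up
      have hIcard : I.card ≤ it - i1 + 1 := by
        have hsub : I ⊆ Finset.Icc i1 it := by
          intro i hi
          exact Finset.mem_Icc.mpr ⟨I.min'_le i hi, I.le_max' i hi⟩
        have := Finset.card_le_card hsub
        rwa [Nat.card_Icc, show it + 1 - i1 = it - i1 + 1 by omega] at this
      have hitE : it ∈ I.erase i1 := Finset.mem_erase.mpr ⟨Ne.symm h1t, hitI⟩
      have hsum1 : ∑ i ∈ I, (X ∩ blk i).card =
          (X ∩ blk i1).card + ∑ i ∈ I.erase i1, (X ∩ blk i).card :=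
        (Finset.add_sum_erase I _ hi1I).symm
      have hsum2 : ∑ i ∈ I.erase i1, (X ∩ blk i).card =
          (X ∩ blk it).card + ∑ i ∈ (I.erase i1).erase it, (X ∩ blk i).card :=
        (Finset.add_sum_erase _ _ hitE).symm
      have hmid : ∑ i ∈ (I.erase i1).erase it, (X ∩ blk i).card ≤
          ((I.erase i1).erase it).card := by
        calc ∑ i ∈ (I.erase i1).erase it, (X ∩ blk i).card
            ≤ ∑ i ∈ (I.erase i1).erase it, 1 := by
              apply Finset.sum_le_sum
              intro i hi
              have hiI : i ∈ I := Finset.mem_of_mem_erase (Finset.mem_of_mem_erase hi)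
              have hne1 : i ≠ i1 := (Finset.mem_erase.mp (Finset.mem_of_mem_erase hi)).1
              have hnet : i ≠ it := (Finset.mem_erase.mp hi).1
              exact hboundmid i hiI
                (lt_of_le_of_ne (I.min'_le i hiI) (Ne.symm hne1))
                (lt_of_le_of_ne (I.le_max' i hiI) hnet)
        _ = ((I.erase i1).erase it).card := by simp
      have hmidcard : ((I.erase i1).erase it).card = I.card - 2 := by
        rw [Finset.card_erase_of_mem hitE, Finset.card_erase_of_mem hi1I]
        omega
      have hIcard2 : 2 ≤ I.card := by
        have : ({i1, it} : Finset ℕ) ⊆ I := by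
          intro i hi
          simp only [Finset.mem_insert, Finset.mem_singleton] at hi
          rcases hi with rfl | rfl
          · exact hi1I
          · exact hitI
        have := Finset.card_le_card this
        rwa [Finset.card_insert_of_notMem (by simp [h1t]), Finset.card_singleton] at this
      omega
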